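/- For every f ∈ (−1, 1), the quantity γ(f) = −3f/(2 + √(4 − 3f²)) satisfies |γ(f)| < 1 (in particular γ(f)² < 3, so the denominators 3 + γ² and 3 − γ² are nonzero), and the inverse relation f = −4γ(f)/(3 + γ(f)²) holds. Moreover |γ(±1)| = 1. -/

import Mathlib

/-- The auxiliary variable `γ(f) = −3f/(2 + √(4 − 3f²))` of the slab-geometry `M₁`
closure. -/
noncomputable def gammaM1 (f : ℝ) : ℝ := -3 * f / (2 + Real.sqrt (4 - 3 * f ^ 2))

/-- For every `f ∈ (−1, 1)`, `|γ(f)| < 1` (in particular `γ(f)² < 3`), and the inverse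
relation `f = −4γ(f)/(3 + γ(f)²)` holds.  Moreover `|γ(±1)| = 1`. -/
theorem gammaM1_properties :
    (∀ f : ℝ, f ∈ Set.Ioo (-1 : ℝ) 1 →
      |gammaM1 f| < 1 ∧ (gammaM1 f) ^ 2 < 3 ∧ f = -4 * gammaM1 f / (3 + (gammaM1 f) ^ 2)) ∧
    |gammaM1 1| = 1 ∧ |gammaM1 (-1)| = 1 := by
  refine ⟨?_, ?_, ?_⟩
  · intro f hf
    obtain ⟨h1, h2⟩ := hf
    have hf2 : f ^ 2 < 1 := by nlinarith
    have hnn : (0:ℝ) ≤ 4 - 3 * f ^ 2 := by nlinarith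
    set s := Real.sqrt (4 - 3 * f ^ 2) with hs
    have hs0 : 0 ≤ s := Real.sqrt_nonneg _
    have hssq : s ^ 2 = 4 - 3 * f ^ 2 := Real.sq_sqrt hnn
    have hs1 : 1 < s := by nlinarith
    have hden : (0:ℝ) < 2 + s := by linarith
    have hg : gammaM1 f = -3 * f / (2 + s) := rfl
    have hsq1 : (gammaM1 f) ^ 2 < 1 := by
      rw [hg, div_pow]
      rw [div_lt_one (by positivity)]
      nlinarith
    refine ⟨abs_lt_of_sq_lt_sq (by simpa using hsq1) zero_le_one, by nlinarith, ?_⟩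
    rw [hg]
    have hden2 : (2 + s) ^ 2 ≠ 0 := by positivity
    field_simp
    linear_combination f * hssq
  · have h1 : Real.sqrt (4 - 3 * (1:ℝ) ^ 2) = 1 := by
      norm_num
    rw [gammaM1, h1]
    norm_num
  · have h1 : Real.sqrt (4 - 3 * (-1:ℝ) ^ 2) = 1 := by
      norm_num
    rw [gammaM1, h1]
    norm_num
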